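/- Every element α of IPF(ℕ^n) factors uniquely as α = ρ_α σ_α λ_α, where ρ_α is the translation from dom α = ↑x onto ℕ^n given by z ↦ z - x + 1, λ_α is the translation from ℕ^n onto ran α = ↑y given by z ↦ z + y - 1, and σ_α is an order automorphism of ℕ^n (i.e., a coordinate permutation). -/

import Mathlib

/-- An element of IPF(ℕ^n): a partial bijection of ℕ^n whose source and target are
principal filters and which is an order isomorphism between them. -/
def IsIPF {n : ℕ} (e : PartialEquiv (Fin n → ℕ+) (Fin n → ℕ+)) : Prop :=
  (∃ x, e.source = Set.Ici x) ∧ (∃ y, e.target = Set.Ici y) ∧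
    ∀ a ∈ e.source, ∀ b ∈ e.source, a ≤ b ↔ e a ≤ e b

/-- The composite ρσλ of Lemma 2.14: z ↦ ((z - x + 1) permuted by σ) + y - 1, i.e.
pointwise z_{σ⁻¹(j)} - x_{σ⁻¹(j)} + 1 + y_j - 1 (written so that every PNat
subtraction is exact). -/
def ipfMap {n : ℕ} (x y : Fin n → ℕ+) (σ : Equiv.Perm (Fin n))
    (z : Fin n → ℕ+) : Fin n → ℕ+ :=
  fun j => z (σ.symm j) + 1 - x (σ.symm j) + y j - 1

section core
variable {n : ℕ}

lemma le_single_char {i : Fin n} {k : ℕ} {a : Fin n → ℕ}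
    (h : a ≤ Pi.single i k) : a = Pi.single i (a i) := by
  funext j
  rcases eq_or_ne j i with rfl | hj
  · simp
  · have := h j
    simp [Pi.single_eq_of_ne hj] at this ⊢
    omega

lemma single_le_self (i : Fin n) (z : Fin n → ℕ) : Pi.single i (z i) ≤ z := by
  intro j
  rcases eq_or_ne j i with rfl | hj
  · simp
  · simp [Pi.single_eq_of_ne hj]

def Comp (z : Fin n → ℕ) : Prop :=
  ∀ a b : Fin n → ℕ, a ≤ z → b ≤ z → a ≤ b ∨ b ≤ a

lemma comp_single (i : Fin n) (k : ℕ) : Comp (Pi.single i k) := by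
  intro a b ha hb
  rw [le_single_char ha, le_single_char hb]
  rcases le_total (a i) (b i) with h | h
  · left
    intro j
    rcases eq_or_ne j i with rfl | hj
    · simpa using h
    · simp [Pi.single_eq_of_ne hj]
  · right
    intro j
    rcases eq_or_ne j i with rfl | hj
    · simpa using h
    · simp [Pi.single_eq_of_ne hj]

lemma comp_axis (hn : 0 < n) {z : Fin n → ℕ} (h : Comp z) :
    ∃ i k, z = Pi.single i k := by
  by_contra hc
  push_neg at hc
  -- find two distinct nonzero coordinates
  have h1 : ∃ i, z i ≠ 0 := by
    by_contra h0
    push_neg at h0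
    exact hc ⟨0, hn⟩ 0 (by funext j; simp [h0 j])
  obtain ⟨i, hi⟩ := h1
  have h2 : ∃ j, j ≠ i ∧ z j ≠ 0 := by
    by_contra h0
    push_neg at h0
    apply hc i (z i)
    funext j
    rcases eq_or_ne j i with rfl | hj
    · simp
    · simp [Pi.single_eq_of_ne hj, h0 j hj]
  obtain ⟨j, hji, hj⟩ := h2
  rcases h _ _ (single_le_self i z) (single_le_self j z) with hle | hle
  · have := hle i
    simp [Pi.single_eq_of_ne (Ne.symm hji)] at this
    omega
  · have := hle j
    simp [Pi.single_eq_of_ne hji] at this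
    omega

def iicEquiv (i : Fin n) (k : ℕ) :
    {a : Fin n → ℕ // a ≤ Pi.single i k} ≃ Fin (k + 1) where
  toFun a := ⟨a.1 i, by
    have := a.2 i
    simp at this
    omega⟩
  invFun m := ⟨Pi.single i m.1, by
    intro j
    rcases eq_or_ne j i with rfl | hj
    · simp; omega
    · simp [Pi.single_eq_of_ne hj]⟩
  left_inv a := by
    ext1
    exact (le_single_char a.2).symm
  right_inv m := by
    ext
    simp

lemma card_iic (i : Fin n) (k : ℕ) :
    Nat.card {a : Fin n → ℕ // a ≤ Pi.single i k} = k + 1 :=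
  Nat.card_eq_of_equiv_fin (iicEquiv i k)

lemma core (n : ℕ) (f g : (Fin n → ℕ) → (Fin n → ℕ))
    (hgf : ∀ z, g (f z) = z) (hfg : ∀ z, f (g z) = z)
    (hmono : ∀ a b, a ≤ b ↔ f a ≤ f b) :
    ∃ σ : Equiv.Perm (Fin n), ∀ z j, f z j = z (σ.symm j) := by
  rcases Nat.eq_zero_or_pos n with rfl | hn
  · exact ⟨1, fun z j => j.elim0⟩
  have gmono : ∀ a b, g a ≤ g b ↔ a ≤ b := by
    intro a b
    rw [hmono (g a) (g b), hfg, hfg]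
  -- Comp is preserved
  have hcomp : ∀ z, Comp z → Comp (f z) := by
    intro z hz a b ha hb
    have ha' : g a ≤ z := by rw [← hgf z]; exact (gmono a (f z)).mpr ha
    have hb' : g b ≤ z := by rw [← hgf z]; exact (gmono b (f z)).mpr hb
    rcases hz _ _ ha' hb' with h | h
    · left; rw [← hfg a, ← hfg b]; exact (hmono _ _).mp h
    · right; rw [← hfg a, ← hfg b]; exact (hmono _ _).mp h
  -- cardinality is preserved
  have hcard : ∀ z, Nat.card {a : Fin n → ℕ // a ≤ z}
      = Nat.card {a : Fin n → ℕ // a ≤ f z} := by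
    intro z
    apply Nat.card_congr
    refine ⟨fun a => ⟨f a.1, (hmono _ _).mp a.2⟩,
      fun b => ⟨g b.1, ?_⟩, fun a => ?_, fun b => ?_⟩
    · have : g b.1 ≤ g (f z) := (gmono _ _).mpr b.2
      rwa [hgf] at this
    · ext1; simp [hgf]
    · ext1; simp [hfg]
  have key : ∀ i k, ∃ j, f (Pi.single i k) = Pi.single j k := by
    intro i k
    obtain ⟨j, m, hm⟩ := comp_axis hn (hcomp _ (comp_single i k))
    refine ⟨j, ?_⟩
    have := hcard (Pi.single i k)
    rw [hm, card_iic, card_iic] at this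
    rw [hm, show m = k by omega]
  have f0 : f 0 = 0 := by
    have : f 0 ≤ f (g 0) := (hmono _ _).mp (by intro j; simp)
    rw [hfg] at this
    exact le_antisymm this (by intro j; simp)
  choose σ0 hσ0 using fun i => key i 1
  have hsingle : ∀ i k, f (Pi.single i k) = Pi.single (σ0 i) k := by
    intro i k
    rcases Nat.eq_zero_or_pos k with rfl | hk
    · simpa using f0
    obtain ⟨j, hj⟩ := key i k
    have h1 : (Pi.single (σ0 i) 1 : Fin n → ℕ) ≤ Pi.single j k := by
      have hle : (Pi.single i 1 : Fin n → ℕ) ≤ (Pi.single i k : Fin n → ℕ) := by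
        intro l
        rcases eq_or_ne l i with rfl | hl
        · simp only [Pi.single_eq_same]; omega
        · simp [Pi.single_eq_of_ne hl]
      rw [← hσ0 i, ← hj]
      exact (hmono _ _).mp hle
    have h2 := h1 (σ0 i)
    rcases eq_or_ne (σ0 i) j with h | h
    · rw [hj, h]
    · simp only [Pi.single_eq_same, Pi.single_eq_of_ne h] at h2
      omega
  have hinj : Function.Injective σ0 := by
    intro i i' h
    have : f (Pi.single i 1) = f (Pi.single i' 1) := by
      rw [hsingle, hsingle, h]
    have h2 : (Pi.single i 1 : Fin n → ℕ) = (Pi.single i' 1 : Fin n → ℕ) := by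
      rw [← hgf (Pi.single i 1), this, hgf]
    rcases eq_or_ne i i' with h4 | h4
    · exact h4
    · have h3 := congrFun h2 i
      simp only [Pi.single_eq_same, Pi.single_eq_of_ne h4] at h3
      omega
  let σ : Equiv.Perm (Fin n) :=
    Equiv.ofBijective σ0 (Finite.injective_iff_bijective.mp hinj)
  have hσ : ∀ i, σ i = σ0 i := fun i => rfl
  refine ⟨σ, fun z j => ?_⟩
  have main : ∀ i, f z (σ0 i) = z i := by
    intro i
    have hge : z i ≤ f z (σ0 i) := by
      have : Pi.single (σ0 i) (z i) ≤ f z := by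
        rw [← hsingle]
        exact (hmono _ _).mp (single_le_self i z)
      simpa using this (σ0 i)
    have hle : f z (σ0 i) ≤ z i := by
      have h1 : Pi.single (σ0 i) (f z (σ0 i)) ≤ f z := single_le_self _ _
      have h2 : g (Pi.single (σ0 i) (f z (σ0 i))) ≤ g (f z) := (gmono _ _).mpr h1
      rw [hgf] at h2
      have h3 : g (Pi.single (σ0 i) (f z (σ0 i))) = Pi.single i (f z (σ0 i)) := by
        rw [← hsingle i, hgf]
      rw [h3] at h2
      simpa using h2 i
    omega
  have h5 : σ0 (σ.symm j) = j := by
    rw [← hσ, Equiv.apply_symm_apply]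
  calc f z j = f z (σ0 (σ.symm j)) := by rw [h5]
    _ = z (σ.symm j) := main _

end core

section glue
variable {n : ℕ}

def upT (x : Fin n → ℕ+) (z : Fin n → ℕ) : Fin n → ℕ+ :=
  fun i => ⟨(x i : ℕ) + z i, by have := (x i).pos; omega⟩

@[simp] lemma upT_coe (x : Fin n → ℕ+) (z : Fin n → ℕ) (i : Fin n) :
    ((upT x z i : ℕ+) : ℕ) = (x i : ℕ) + z i := rfl

lemma le_upT (x : Fin n → ℕ+) (z : Fin n → ℕ) : x ≤ upT x z := by
  intro i
  rw [← PNat.coe_le_coe, upT_coe]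
  omega

lemma upT_sub (x : Fin n → ℕ+) (w : Fin n → ℕ+) (h : x ≤ w) :
    upT x (fun i => (w i : ℕ) - x i) = w := by
  funext i
  have hi := h i
  rw [← PNat.coe_le_coe] at hi
  apply PNat.coe_injective
  rw [upT_coe]
  omega

lemma ipfMap_coe (x y z : Fin n → ℕ+) (σ : Equiv.Perm (Fin n)) (j : Fin n)
    (h : x (σ.symm j) ≤ z (σ.symm j)) :
    ((ipfMap x y σ z j : ℕ+) : ℕ) = (z (σ.symm j) : ℕ) - x (σ.symm j) + y j := by
  have h' : (x (σ.symm j) : ℕ) ≤ z (σ.symm j) := (PNat.coe_le_coe _ _).mpr h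
  unfold ipfMap
  have h1 : x (σ.symm j) < z (σ.symm j) + 1 := by
    rw [← PNat.coe_lt_coe, PNat.add_coe, PNat.one_coe]
    omega
  set A : ℕ+ := z (σ.symm j) + 1 - x (σ.symm j) with hA
  have hA' : (A : ℕ) = (z (σ.symm j) : ℕ) + 1 - x (σ.symm j) := by
    rw [hA, PNat.sub_coe, if_pos h1, PNat.add_coe, PNat.one_coe]
  have h2 : (1 : ℕ+) < A + y j := by
    rw [← PNat.coe_lt_coe, PNat.add_coe, PNat.one_coe]
    have := (A).pos
    have := (y j).pos
    omega
  rw [PNat.sub_coe, if_pos h2, PNat.add_coe, PNat.one_coe, hA']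
  have := (y j).pos
  omega
end glue

/-- Every α ∈ IPF(ℕ^n) factors uniquely as α = ρ_α σ_α λ_α, where
ρ_α : ↑x → ℕ^n, z ↦ z - x + 1, λ_α : ℕ^n → ↑y, z ↦ z + y - 1 (x, y the generators of
dom α, ran α) and σ_α a coordinate permutation (order automorphism of ℕ^n);
equivalently, there is a unique triple (x, y, σ) with dom α = ↑x, ran α = ↑y and
α acting by the composite formula. -/
theorem stmt11 (n : ℕ) (e : PartialEquiv (Fin n → ℕ+) (Fin n → ℕ+)) (he : IsIPF e) :
    ∃! t : (Fin n → ℕ+) × (Fin n → ℕ+) × Equiv.Perm (Fin n),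
      e.source = Set.Ici t.1 ∧ e.target = Set.Ici t.2.1 ∧
      ∀ z ∈ e.source, e z = ipfMap t.1 t.2.1 t.2.2 z := by
  obtain ⟨⟨x, hx⟩, ⟨y, hy⟩, hiso⟩ := he
  set f : (Fin n → ℕ) → (Fin n → ℕ) :=
    fun z i => ((e (upT x z) i : ℕ+) : ℕ) - y i with hf
  set g : (Fin n → ℕ) → (Fin n → ℕ) :=
    fun w i => ((e.symm (upT y w) i : ℕ+) : ℕ) - x i with hg
  have hsrc : ∀ z, upT x z ∈ e.source := fun z => by
    rw [hx]; exact le_upT x z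
  have htgt : ∀ w, upT y w ∈ e.target := fun w => by
    rw [hy]; exact le_upT y w
  have hmemt : ∀ z, y ≤ e (upT x z) := by
    intro z
    have h := e.map_source (hsrc z)
    rw [hy] at h
    exact h
  have hmems : ∀ w, x ≤ e.symm (upT y w) := by
    intro w
    have h := e.map_target (htgt w)
    rw [hx] at h
    exact h
  have hupf : ∀ z, upT y (f z) = e (upT x z) := by
    intro z
    funext i
    have h1 := (PNat.coe_le_coe _ _).mpr (hmemt z i)
    apply PNat.coe_injective
    rw [upT_coe, hf]
    simp only
    omega
  have hupg : ∀ w, upT x (g w) = e.symm (upT y w) := by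
    intro w
    funext i
    have h1 := (PNat.coe_le_coe _ _).mpr (hmems w i)
    apply PNat.coe_injective
    rw [upT_coe, hg]
    simp only
    omega
  have hgf : ∀ z, g (f z) = z := by
    intro z
    funext i
    rw [hg]
    simp only
    rw [hupf z, e.left_inv (hsrc z), upT_coe]
    omega
  have hfg : ∀ w, f (g w) = w := by
    intro w
    funext i
    rw [hf]
    simp only
    rw [hupg w, e.right_inv (htgt w), upT_coe]
    omega
  have hupmono : ∀ (c : Fin n → ℕ+) (a b : Fin n → ℕ),
      upT c a ≤ upT c b ↔ a ≤ b := by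
    intro c a b
    constructor
    · intro h i
      have h1 := (PNat.coe_le_coe _ _).mpr (h i)
      rw [upT_coe, upT_coe] at h1
      show a i ≤ b i
      omega
    · intro h i
      rw [← PNat.coe_le_coe, upT_coe, upT_coe]
      have h2 : a i ≤ b i := h i
      omega
  have hmono : ∀ a b, a ≤ b ↔ f a ≤ f b := by
    intro a b
    rw [← hupmono x a b, hiso _ (hsrc a) _ (hsrc b)]
    constructor
    · intro h i
      have h0 := (PNat.coe_le_coe _ _).mpr (h i)
      have h1 := (PNat.coe_le_coe _ _).mpr (hmemt a i)
      show f a i ≤ f b i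
      rw [hf]; simp only
      omega
    · intro h i
      have h0 : f a i ≤ f b i := h i
      rw [hf] at h0
      simp only at h0
      have h1 := (PNat.coe_le_coe _ _).mpr (hmemt a i)
      have h2 := (PNat.coe_le_coe _ _).mpr (hmemt b i)
      rw [← PNat.coe_le_coe]
      omega
  obtain ⟨σ, hσ⟩ := core n f g hgf hfg hmono
  have formula : ∀ (τ : Equiv.Perm (Fin n)),
      (∀ z (j : Fin n), f z j = z (τ.symm j)) →
      ∀ z ∈ e.source, e z = ipfMap x y τ z := by
    intro τ hτ w hw
    rw [hx] at hw
    funext j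
    apply PNat.coe_injective
    have hle : x (τ.symm j) ≤ w (τ.symm j) := hw (τ.symm j)
    rw [ipfMap_coe x y w τ j hle]
    have hz := hτ (fun i => (w i : ℕ) - x i) j
    rw [hf] at hz
    simp only at hz
    rw [upT_sub x w hw] at hz
    have h1 : e w ∈ e.target := e.map_source (by rw [hx]; exact hw)
    rw [hy] at h1
    have h2 := (PNat.coe_le_coe _ _).mpr (h1 j)
    have h3 := (PNat.coe_le_coe _ _).mpr hle
    omega
  refine ⟨(x, y, σ), ⟨hx, hy, formula σ hσ⟩, ?_⟩
  rintro ⟨x', y', σ'⟩ ⟨hx', hy', hform'⟩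
  have hx'' : e.source = Set.Ici x' := hx'
  have hy'' : e.target = Set.Ici y' := hy'
  have hform'' : ∀ z ∈ e.source, e z = ipfMap x' y' σ' z := hform'
  have hxx : x' = x := Set.Ici_injective (hx''.symm.trans hx)
  have hyy : y' = y := Set.Ici_injective (hy''.symm.trans hy)
  rw [hxx, hyy] at hform''
  have hσσ : σ' = σ := by
    apply Equiv.ext
    intro i
    set w : Fin n → ℕ+ := upT x (Pi.single i 1) with hw
    have hws : w ∈ e.source := hsrc _
    have heq : ipfMap x y σ' w = ipfMap x y σ w := by
      rw [← hform'' w hws, formula σ hσ w hws]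
    have heqj := congrArg (fun v => ((v (σ i) : ℕ+) : ℕ)) heq
    have hle1 : x (σ.symm (σ i)) ≤ w (σ.symm (σ i)) := le_upT x _ _
    have hle2 : x (σ'.symm (σ i)) ≤ w (σ'.symm (σ i)) := le_upT x _ _
    rw [ipfMap_coe x y w σ' (σ i) hle2, ipfMap_coe x y w σ (σ i) hle1] at heqj
    rw [hw] at heqj
    simp only [upT_coe, Equiv.symm_apply_apply] at heqj
    have hval : (Pi.single i 1 : Fin n → ℕ) (σ'.symm (σ i)) = 1 := by
      simp only [Pi.single_eq_same] at heqj
      omega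
    have h5 : σ'.symm (σ i) = i := by
      by_contra hne
      rw [Pi.single_eq_of_ne hne] at hval
      omega
    have h6 := congrArg σ' h5
    rw [Equiv.apply_symm_apply] at h6
    exact h6.symm
  exact Prod.ext hxx (Prod.ext hyy hσσ)
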